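/- Let T be a continuous linear operator on a separable Fréchet space satisfying: there exist a family of natural numbers n_{k,j} = a_k + j·c_k (k ∈ ℕ, 0 ≤ j ≤ k, with c_k ≥ 1), dense sets X₀, Y₀ ⊆ X, and maps S_{k,j} : Y₀ → X such that for every x ∈ X₀ and y ∈ Y₀: (1) T^{n_{k,j}} x → 0 as k → ∞, uniformly in 0 ≤ j ≤ k; (2) (S_{k,0} + ... + S_{k,k})(y) → 0; (3) T^{n_{k,j}}(S_{k,0} + ... + S_{k,k})(y) → y as k → ∞, uniformly in j ≤ k. Then T is multiply recurrent. -/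

import Mathlib

open Filter Topology

theorem criterion_implies_multiplyRecurrent
    {X : Type*} [AddCommGroup X] [Module ℝ X] [UniformSpace X] [IsUniformAddGroup X]
    [ContinuousSMul ℝ X] [LocallyConvexSpace ℝ X] [CompleteSpace X]
    [TopologicalSpace.MetrizableSpace X] [TopologicalSpace.SeparableSpace X]
    (T : X →L[ℝ] X) (a c : ℕ → ℕ) (hc : ∀ k, 1 ≤ c k)
    (X₀ Y₀ : Set X) (hX₀ : Dense X₀) (hY₀ : Dense Y₀)
    (S : ℕ → ℕ → X → X)
    (h1 : ∀ x ∈ X₀, ∀ W ∈ 𝓝 (0 : X), ∃ K : ℕ, ∀ k ≥ K, ∀ j ≤ k,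
        (T ^ (a k + j * c k)) x ∈ W)
    (h2 : ∀ y ∈ Y₀,
        Tendsto (fun k : ℕ => ∑ i ∈ Finset.range (k + 1), S k i y) atTop (𝓝 0))
    (h3 : ∀ y ∈ Y₀, ∀ W ∈ 𝓝 y, ∃ K : ℕ, ∀ k ≥ K, ∀ j ≤ k,
        (T ^ (a k + j * c k)) (∑ i ∈ Finset.range (k + 1), S k i y) ∈ W) :
    ∀ U : Set X, IsOpen U → U.Nonempty → ∀ m : ℕ,
      ∃ k : ℕ, 1 ≤ k ∧ ∃ x ∈ U, ∀ j ≤ m, (T ^ (j * k)) x ∈ U := by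
  intro U hU hne m
  obtain ⟨y, hyY, hyU⟩ := hY₀.exists_mem_open hU hne
  obtain ⟨K, hK⟩ := h3 y hyY U (hU.mem_nhds hyU)
  set k := max K m with hk
  refine ⟨c k, hc k, (T ^ (a k)) (∑ i ∈ Finset.range (k + 1), S k i y), ?_, ?_⟩
  · have h0 := hK k (le_max_left _ _) 0 (Nat.zero_le _)
    simpa using h0
  · intro j hj
    have h := hK k (le_max_left _ _) j (hj.trans (le_max_right _ _))
    have : (T ^ (j * c k)) ((T ^ (a k)) (∑ i ∈ Finset.range (k + 1), S k i y))
        = (T ^ (a k + j * c k)) (∑ i ∈ Finset.range (k + 1), S k i y) := by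
      rw [← ContinuousLinearMap.mul_apply, ← pow_add, add_comm]
    rw [this]
    exact h
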